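/- Let m, n ≥ 1 and let A : Fin m → Fin n → ℕ be an access matrix, where A i j is the number of views of video j from IP i. Fix a video j, and suppose its total view count v_j = ∑_{i} A i j satisfies v_j ≥ 1. Let k : Fin m be an IP with A k j = 0. If A' is the matrix obtained from A by replacing the entry A k j with 1 and leaving all other entries unchanged, then the video entropy of column j strictly increases: H_v'(j) > H_v(j), where H_v'(j) is the video entropy of video j computed from A'. (This is the paper's Proposition 4: for a video j and an incremental view from some IP k, if k has not viewed j before, then the video entropy of j increases.) -/
import Mathlib


open Real Finset

/-- Shannon entropy of a count vector `a : Fin m → ℕ` with total sum `∑ i, a i`: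
`H(a) = -∑ i, (a i / v) * ln (a i / v)` where `v = ∑ i, a i`.
(Terms with `a i = 0` contribute `0` since `Real.log 0 = 0`.) -/
noncomputable def countEntropy {m : ℕ} (a : Fin m → ℕ) : ℝ :=
  -∑ j, ((a j : ℝ) / (∑ i, a i : ℕ)) * Real.log ((a j : ℝ) / (∑ i, a i : ℕ))

/-- The video entropy of video `j` for an access matrix `A : Fin m → Fin n → ℕ`
(`A i j` = number of views of video `j` from IP `i`) is the Shannon entropy of
the `j`-th column of `A`. -/
noncomputable def videoEntropy {m n : ℕ} (A : Fin m → Fin n → ℕ) (j : Fin n) : ℝ :=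
  countEntropy (fun i => A i j)

private lemma term_eq (a v : ℕ) (hv : v ≠ 0) :
    ((a : ℝ) / v) * Real.log ((a : ℝ) / v)
      = ((a : ℝ) * Real.log a) / v - ((a : ℝ) / v) * Real.log v := by
  rcases Nat.eq_zero_or_pos a with ha | ha
  · simp [ha]
  · rw [Real.log_div (Nat.cast_ne_zero.mpr ha.ne') (Nat.cast_ne_zero.mpr hv)]
    ring

private lemma entropy_eq {m : ℕ} (a : Fin m → ℕ) (v : ℕ) (hv : v = ∑ i, a i)
    (hv0 : v ≠ 0) :
    countEntropy a = Real.log v - (∑ i, (a i : ℝ) * Real.log (a i)) / v := by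
  unfold countEntropy
  rw [← hv]
  have hvr : (v : ℝ) ≠ 0 := Nat.cast_ne_zero.mpr hv0
  have h1 : ∑ i, ((a i : ℝ) / v) * Real.log ((a i : ℝ) / v)
      = (∑ i, (a i : ℝ) * Real.log (a i)) / v - Real.log v := by
    calc ∑ i, ((a i : ℝ) / v) * Real.log ((a i : ℝ) / v)
        = ∑ i, (((a i : ℝ) * Real.log (a i)) / v - ((a i : ℝ) / v) * Real.log v) :=
          Finset.sum_congr rfl fun i _ => term_eq (a i) v hv0
      _ = (∑ i, (a i : ℝ) * Real.log (a i)) / v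
            - ((∑ i, (a i : ℝ)) / v) * Real.log v := by
          rw [Finset.sum_sub_distrib, ← Finset.sum_div, ← Finset.sum_mul,
            ← Finset.sum_div]
      _ = (∑ i, (a i : ℝ) * Real.log (a i)) / v - Real.log v := by
          have : (∑ i, (a i : ℝ)) = (v : ℝ) := by
            rw [hv]; push_cast; ring
          rw [this, div_self hvr, one_mul]
  rw [h1]; ring

/-- Proposition 4: if video `j` has total view count `v_j ≥ 1`,
IP `k` has not viewed `j` before (`A k j = 0`), and `A'` is obtained from `A`
by setting the entry `(k, j)` to `1` and leaving all other entries unchanged,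
then the video entropy of `j` strictly increases. -/
theorem videoEntropy_strict_increase (m n : ℕ) (hm : 1 ≤ m) (hn : 1 ≤ n)
    (A A' : Fin m → Fin n → ℕ) (j : Fin n)
    (v : ℕ) (hv : v = ∑ i, A i j) (hv1 : 1 ≤ v)
    (k : Fin m) (hk : A k j = 0)
    (hA' : ∀ i j', A' i j' = if i = k ∧ j' = j then 1 else A i j') :
    videoEntropy A' j > videoEntropy A j := by
  have hv0 : v ≠ 0 := by omega
  have hvpos : (0 : ℝ) < v := by exact_mod_cast hv1
  have ha' : ∀ i, A' i j = if i = k then 1 else A i j := by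
    intro i; rw [hA']; by_cases h : i = k <;> simp [h]
  -- sum of the new column is v + 1
  have hsum' : (v + 1 : ℕ) = ∑ i, A' i j := by
    have e1 : ∑ i, A' i j = A' k j + ∑ i ∈ univ.erase k, A' i j :=
      (Finset.add_sum_erase _ _ (mem_univ k)).symm
    have e2 : ∑ i, A i j = A k j + ∑ i ∈ univ.erase k, A i j :=
      (Finset.add_sum_erase _ _ (mem_univ k)).symm
    have e3 : ∑ i ∈ univ.erase k, A' i j = ∑ i ∈ univ.erase k, A i j := by
      refine Finset.sum_congr rfl fun i hi => ?_
      rw [ha' i, if_neg (Finset.ne_of_mem_erase hi)]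
    rw [e1, e3, ha' k, if_pos rfl]
    omega
  -- the "S" sums agree
  have hS : ∑ i, (A' i j : ℝ) * Real.log (A' i j)
      = ∑ i, (A i j : ℝ) * Real.log (A i j) := by
    refine Finset.sum_congr rfl fun i _ => ?_
    rw [ha' i]
    by_cases h : i = k
    · simp [h, hk]
    · simp [h]
  set S : ℝ := ∑ i, (A i j : ℝ) * Real.log (A i j) with hSdef
  have hSnonneg : 0 ≤ S := by
    refine Finset.sum_nonneg fun i _ => ?_
    rcases Nat.eq_zero_or_pos (A i j) with h | h
    · simp [h]
    · exact mul_nonneg (by positivity) (Real.log_nonneg (by exact_mod_cast h))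
  have hH : videoEntropy A j = Real.log v - S / v :=
    entropy_eq (fun i => A i j) v hv hv0
  have hH' : videoEntropy A' j = Real.log (v + 1) - S / (v + 1) := by
    have := entropy_eq (fun i => A' i j) (v + 1) hsum' (by omega)
    rw [videoEntropy, this]
    beta_reduce
    rw [hS]
    push_cast
    ring_nf
  rw [hH, hH']
  have hlog : Real.log v < Real.log (v + 1) := Real.log_lt_log hvpos (by linarith)
  have hdiv : S / ((v : ℝ) + 1) ≤ S / v := by
    apply div_le_div_of_nonneg_left hSnonneg hvpos
    linarith
  push_cast
  linarith
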